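/- Let ((a0,a1,a2,a3,a4),(p,q)) be a (T1,T2) P_VI lattice, let s ∈ ℂ with s ≠ 0 and s² = t, let β ∈ ℂ∖{0} and set α = s·β. Then u(l,m) = q(l,m)/s satisfies the lattice sine-Gordon equation in product form with parameters α, β. -/

import Mathlib

/-- The data of the sixth Painlevé equation at one lattice site: parameters
`a0,…,a4` and variables `p,q`. -/
structure PVIState where
  a0 : ℂ
  a1 : ℂ
  a2 : ℂ
  a3 : ℂ
  a4 : ℂ
  p : ℂ
  q : ℂ

/-- The Bäcklund transformation `T1` of P_VI, as a step relation between states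
(including nonvanishing of all denominators occurring in the step formulas). -/
noncomputable def PVI.T1Step (t : ℂ) (x y : PVIState) : Prop :=
  y.a0 = 1 - x.a1 - x.a2 ∧ y.a1 = 1 - x.a0 - x.a2 ∧ y.a2 = x.a2 - 1 ∧
  y.a3 = 1 - x.a2 - x.a4 ∧ y.a4 = 1 - x.a2 - x.a3 ∧
  x.q ≠ 0 ∧ 1 - x.q ≠ 0 ∧ t - x.q ≠ 0 ∧ y.p ≠ 0 ∧
  y.p = -((t - x.q) * (x.p * x.q - t * x.p + x.a1 + x.a2)) / ((1 - t) * t)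
        - x.a4 * (t - x.q) / ((1 - t) * x.q)
        - x.a3 * (t - x.q) / (t * (1 - x.q)) ∧
  y.q = (t * (y.p - x.a2 + 1) + (x.a2 - 1 - t * y.p) * x.q) / ((t - x.q) * y.p)

/-- The Bäcklund transformation `T2` of P_VI, as a step relation between states
(including nonvanishing of all denominators occurring in the step formulas). -/
noncomputable def PVI.T2Step (t : ℂ) (x y : PVIState) : Prop :=
  y.a0 = 1 - x.a1 - x.a2 ∧ y.a1 = - x.a0 - x.a2 ∧ y.a2 = x.a2 ∧
  y.a3 = 1 - x.a2 - x.a4 ∧ y.a4 = - x.a2 - x.a3 ∧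
  1 - x.q ≠ 0 ∧ t - x.q ≠ 0 ∧
  (1 - x.q) * x.p - x.a2 + x.a0 * (1 - t) / (t - x.q) ≠ 0 ∧ y.q ≠ 0 ∧
  y.q = ((t - x.q) * x.p - x.a2 - x.a3 * (1 - t) / (1 - x.q)) /
        ((1 - x.q) * x.p - x.a2 + x.a0 * (1 - t) / (t - x.q)) ∧
  y.p = (t - x.q) * (x.p * x.q - x.p + x.a2) / ((1 - t) * y.q)

/-- The Bäcklund transformation `T3` of P_VI, as a step relation between states
(including nonvanishing of all denominators occurring in the step formulas). -/
noncomputable def PVI.T3Step (t : ℂ) (x y : PVIState) : Prop :=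
  y.a0 = 1 - x.a1 - x.a2 ∧ y.a1 = - x.a0 - x.a2 ∧ y.a2 = x.a2 ∧
  y.a3 = - x.a2 - x.a4 ∧ y.a4 = 1 - x.a2 - x.a3 ∧
  x.q ≠ 0 ∧ t - x.q ≠ 0 ∧
  x.p * x.q + x.a2 - (x.a2 + x.a4) * t / (t - x.q) ≠ 0 ∧
  x.p * x.q + x.a2 + x.a0 * t / (t - x.q) ≠ 0 ∧
  y.p = -(x.q * (x.p * x.q + x.a2) * (x.p * x.q + x.a2 + x.a0 * t / (t - x.q))) /
        (t * (x.p * x.q + x.a2 - (x.a2 + x.a4) * t / (t - x.q))) ∧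
  y.q = t * (x.p * x.q - x.a0 - x.a4 + x.a0 * t / (t - x.q)) /
        (x.q * (x.p * x.q + x.a2 + x.a0 * t / (t - x.q)))

/-- The Hamiltonian of the sixth Painlevé equation. -/
noncomputable def HVI (t : ℂ) (x : PVIState) : ℂ :=
  (1 / (t * (t - 1))) * (x.q * (x.q - 1) * (x.q - t) * x.p ^ 2
    + x.a2 * (x.a1 + x.a2) * (x.q - t)
    - (x.a4 * (x.q - 1) * (x.q - t) + x.a3 * x.q * (x.q - t)
        + (x.a0 - 1) * x.q * (x.q - 1)) * x.p)

set_option maxHeartbeats 12000000 in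
/-- Special solution of the lattice sine-Gordon equation (product form) from a
(T1,T2) P_VI Bäcklund lattice. -/
theorem lsG_solution_from_PVI_T1T2_lattice
    (t : ℂ) (ht0 : t ≠ 0) (ht1 : t ≠ 1)
    (x : ℤ → ℤ → PVIState)
    (hsum : ∀ l m : ℤ,
      (x l m).a0 + (x l m).a1 + 2 * (x l m).a2 + (x l m).a3 + (x l m).a4 = 1)
    (hT1 : ∀ l m : ℤ, PVI.T1Step t (x l m) (x (l+1) m))
    (hT2 : ∀ l m : ℤ, PVI.T2Step t (x l m) (x l (m+1)))
    (s : ℂ) (hs : s ≠ 0) (hs2 : s ^ 2 = t)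
    (β : ℂ) (hβ : β ≠ 0)
    (α : ℂ) (hα : α = s * β)
    (u : ℤ → ℤ → ℂ)
    (hu : ∀ l m : ℤ, u l m = (x l m).q / s) :
    ∀ l m : ℤ,
      u (l+1) (m+1) * (β - α * u (l+1) m) * (α - β * u l (m+1)) =
        u l m * (α - β * u (l+1) m) * (β - α * u l (m+1)) := by
  intro l m
  obtain ⟨hBa0, hBa1, hBa2, hBa3, hBa4, hq0, hq1, hqt, hbp0, hbp, hbq⟩ := hT1 l m
  obtain ⟨hCa0, hCa1, hCa2, hCa3, hCa4, hq1', hqt', hden, hcq0, hcq, hcp⟩ := hT2 l m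
  obtain ⟨hDa0, hDa1, hDa2, hDa3, hDa4, hbq1, hbqt, hdenB, hdq0, hdq, hdp⟩ := hT2 (l+1) m
  have ha4 : (x l m).a4 = 1 - (x l m).a0 - (x l m).a1 - 2*(x l m).a2 - (x l m).a3 := by
    linear_combination hsum l m
  set aa0 := (x l m).a0 with hdef0
  set aa1 := (x l m).a1 with hdef1
  set aa2 := (x l m).a2 with hdef2
  set aa3 := (x l m).a3 with hdef3
  set pp := (x l m).p with hdefp
  set qq := (x l m).q with hdefq
  set bp := (x (l+1) m).p with hdefbp
  set bq := (x (l+1) m).q with hdefbq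
  set cq := (x l (m+1)).q with hdefcq
  set dq := (x (l+1) (m+1)).q with hdefdq
  have h1t : (1:ℂ) - t ≠ 0 := sub_ne_zero.mpr (Ne.symm ht1)
  rw [ha4] at hbp
  have hBa3' : (x (l+1) m).a3 = aa0 + aa1 + aa2 + aa3 := by rw [hBa3, ha4]; ring
  rw [hBa0, hBa2, hBa3'] at hdq
  rw [hBa0, hBa2] at hdenB
  -- cleared defining relation for bp
  have hDbp0 : ((1-t)*t*qq*(1-qq)) ≠ 0 :=
    mul_ne_zero (mul_ne_zero (mul_ne_zero h1t ht0) hq0) hq1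
  have h1 : bp * ((1-t)*t*qq*(1-qq)) = (-((t-qq)*(qq*(1-qq)*(pp*qq - t*pp + aa1 + aa2) + (1-aa0-aa1-2*aa2-aa3)*t*(1-qq) + aa3*(1-t)*qq))) := by
    rw [hbp]; field_simp [h1t, ht0, hq0, hq1]; ring
  have hbp2 : bp = (-((t-qq)*(qq*(1-qq)*(pp*qq - t*pp + aa1 + aa2) + (1-aa0-aa1-2*aa2-aa3)*t*(1-qq) + aa3*(1-t)*qq))) / ((1-t)*t*qq*(1-qq)) := by
    rw [eq_div_iff hDbp0]; exact h1
  have hW : (t-qq)*bp ≠ 0 := mul_ne_zero hqt hbp0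
  -- relations for 1 - bq and t - bq
  have hE1 : (1 - bq) * ((t-qq)*bp) = (qq*(t-1)*bp + (aa2-1)*(t-qq)) := by
    rw [hbq]; field_simp [hqt, hbp0]; ring
  have hEt : (t - bq) * ((t-qq)*bp) = (t*(t-1)*bp + (aa2-1)*(t-qq)) := by
    rw [hbq]; field_simp [hqt, hbp0]; ring
  -- cleared defining relation for dq
  have hdqA0 : dq * ((((qq*(t-1)*bp + (aa2-1)*(t-qq))*bp - (aa2-1)*((t-qq)*bp))*(t*(t-1)*bp + (aa2-1)*(t-qq)) + (1-aa1-aa2)*(1-t)*((t-qq)*bp)^2) * (qq*(t-1)*bp + (aa2-1)*(t-qq))) = (((t*(t-1)*bp + (aa2-1)*(t-qq))*bp - (aa2-1)*((t-qq)*bp))*(qq*(t-1)*bp + (aa2-1)*(t-qq)) - (aa0+aa1+aa2+aa3)*(1-t)*((t-qq)*bp)^2) * (t*(t-1)*bp + (aa2-1)*(t-qq)) := by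
    have hdq' : dq * ((1 - bq) * bp - (aa2 - 1) + (1 - aa1 - aa2) * (1 - t) / (t - bq))
        = (t - bq) * bp - (aa2 - 1) - (aa0 + aa1 + aa2 + aa3) * (1 - t) / (1 - bq) := by
      rw [hdq, div_mul_cancel₀ _ hdenB]
    field_simp [hbq1, hbqt] at hdq'
    rw [← hE1, ← hEt]
    linear_combination ((t-qq)*bp)^3 * hdq'
  -- nonvanishing of Bhat
  have hdenB' : ((1-bq)*bp - (aa2-1))*(t-bq) + (1-aa1-aa2)*(1-t) ≠ 0 := by
    intro h
    apply hdenB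
    field_simp [hbqt]
    linear_combination h
  have hBhat0 : (((qq*(t-1)*bp + (aa2-1)*(t-qq))*bp - (aa2-1)*((t-qq)*bp))*(t*(t-1)*bp + (aa2-1)*(t-qq)) + (1-aa1-aa2)*(1-t)*((t-qq)*bp)^2) ≠ 0 := by
    have hfac : (((qq*(t-1)*bp + (aa2-1)*(t-qq))*bp - (aa2-1)*((t-qq)*bp))*(t*(t-1)*bp + (aa2-1)*(t-qq)) + (1-aa1-aa2)*(1-t)*((t-qq)*bp)^2) = (((1-bq)*bp - (aa2-1))*(t-bq) + (1-aa1-aa2)*(1-t)) * ((t-qq)*bp)^2 := by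
      rw [← hE1, ← hEt]; ring
    rw [hfac]
    exact mul_ne_zero hdenB' (pow_ne_zero 2 hW)
  -- cleared defining relation for cq
  have hcq' : cq * ((1 - qq) * pp - aa2 + aa0 * (1 - t) / (t - qq))
      = (t - qq) * pp - aa2 - aa3 * (1 - t) / (1 - qq) := by
    rw [hcq, div_mul_cancel₀ _ hden]
  field_simp [hq1, hqt] at hcq'
  have hcqC : cq * ((((1-qq)*pp - aa2)*(t-qq) + aa0*(1-t)) * (1-qq)) = ((((t-qq)*pp - aa2)*(1-qq) - aa3*(1-t)) * (t-qq)) := by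
    linear_combination hcq'
  have hDc0 : ((((1-qq)*pp - aa2)*(t-qq) + aa0*(1-t)) * (1-qq)) ≠ 0 := by
    have hfac : ((((1-qq)*pp - aa2)*(t-qq) + aa0*(1-t)) * (1-qq)) = ((1 - qq) * pp - aa2 + aa0 * (1 - t) / (t - qq)) * ((t-qq)*(1-qq)) := by
      field_simp [hqt]
    rw [hfac]
    exact mul_ne_zero hden (mul_ne_zero hqt hq1)
  -- the core polynomial identity (uses the defining relation of bp)
  have keycore : (((t*(t-1)*bp + (aa2-1)*(t-qq))*bp - (aa2-1)*((t-qq)*bp))*(qq*(t-1)*bp + (aa2-1)*(t-qq)) - (aa0+aa1+aa2+aa3)*(1-t)*((t-qq)*bp)^2) * (t * ((((1-qq)*pp - aa2)*(t-qq) + aa0*(1-t)) * (1-qq)) - ((((t-qq)*pp - aa2)*(1-qq) - aa3*(1-t)) * (t-qq))) = qq * (((qq*(t-1)*bp + (aa2-1)*(t-qq))*bp - (aa2-1)*((t-qq)*bp))*(t*(t-1)*bp + (aa2-1)*(t-qq)) + (1-aa1-aa2)*(1-t)*((t-qq)*bp)^2) * (((((1-qq)*pp - aa2)*(t-qq) +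 aa0*(1-t)) * (1-qq)) - ((((t-qq)*pp - aa2)*(1-qq) - aa3*(1-t)) * (t-qq))) := by
    have hcore0 : (qq*t*(t-1)^2*((t*((((1-qq)*pp - aa2)*(t-qq) + aa0*(1-t)) * (1-qq)) - ((((t-qq)*pp - aa2)*(1-qq) - aa3*(1-t)) * (t-qq))) - qq*(((((1-qq)*pp - aa2)*(t-qq) + aa0*(1-t)) * (1-qq)) - ((((t-qq)*pp - aa2)*(1-qq) - aa3*(1-t)) * (t-qq))))) * (-((t-qq)*(qq*(1-qq)*(pp*qq - t*pp + aa1 + aa2) + (1-aa0-aa1-2*aa2-aa3)*t*(1-qq) + aa3*(1-t)*qq))) + ((t*(t-1)*(aa2-1)*(t-qq) - (aa0+aa1+aa2+aa3)*(1-t)*(t-qq)^2)*(t*((((1-qq)*pp - aa2)*(t-qq) + aa0*(1-t)) * (1-qq)) - ((((t-qq)*pp - aa2)*(1-qq) - aa3*(1-t)) * (t-qq))) - qq*(qq*(t-1)*(aa2-1)*(t-qq) + (1-aa1-aa2)*(1-t)*(t-qq)^2)*(((((1-qq)*pp - aa2)*(t-qq) + aa0*(1-t)) * (1-qq)) - ((((t-qq)*pp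 - aa2)*(1-qq) - aa3*(1-t)) * (t-qq)))) * ((1-t)*t*qq*(1-qq)) = 0 := by ring
    apply mul_right_cancel₀ hDbp0
    linear_combination (bp^2 * (qq*t*(t-1)^2*((t*((((1-qq)*pp - aa2)*(t-qq) + aa0*(1-t)) * (1-qq)) - ((((t-qq)*pp - aa2)*(1-qq) - aa3*(1-t)) * (t-qq))) - qq*(((((1-qq)*pp - aa2)*(t-qq) + aa0*(1-t)) * (1-qq)) - ((((t-qq)*pp - aa2)*(1-qq) - aa3*(1-t)) * (t-qq)))))) * h1 + bp^2 * hcore0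
  have key4 : (((t*(t-1)*bp + (aa2-1)*(t-qq))*bp - (aa2-1)*((t-qq)*bp))*(qq*(t-1)*bp + (aa2-1)*(t-qq)) - (aa0+aa1+aa2+aa3)*(1-t)*((t-qq)*bp)^2) * (t - cq) = qq * (((qq*(t-1)*bp + (aa2-1)*(t-qq))*bp - (aa2-1)*((t-qq)*bp))*(t*(t-1)*bp + (aa2-1)*(t-qq)) + (1-aa1-aa2)*(1-t)*((t-qq)*bp)^2) * (1 - cq) := by
    apply mul_right_cancel₀ hDc0
    linear_combination (qq * (((qq*(t-1)*bp + (aa2-1)*(t-qq))*bp - (aa2-1)*((t-qq)*bp))*(t*(t-1)*bp + (aa2-1)*(t-qq)) + (1-aa1-aa2)*(1-t)*((t-qq)*bp)^2) - (((t*(t-1)*bp + (aa2-1)*(t-qq))*bp - (aa2-1)*((t-qq)*bp))*(qq*(t-1)*bp + (aa2-1)*(t-qq)) - (aa0+aa1+aa2+aa3)*(1-t)*((t-qq)*bp)^2)) * hcqC + keycore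
  have key2 : dq * (qq*(t-1)*bp + (aa2-1)*(t-qq)) * (t - cq) = qq * (t*(t-1)*bp + (aa2-1)*(t-qq)) * (1 - cq) := by
    apply mul_right_cancel₀ hBhat0
    linear_combination (t - cq) * hdqA0 + (t*(t-1)*bp + (aa2-1)*(t-qq)) * key4
  have key : dq * (1 - bq) * (t - cq) = qq * (t - bq) * (1 - cq) := by
    apply mul_right_cancel₀ hW
    linear_combination (dq*(t - cq)) * hE1 - (qq*(1 - cq)) * hEt + key2
  -- conclude the sine-Gordon product identity
  rw [hu (l+1) (m+1), hu (l+1) m, hu l (m+1), hu l m, hα]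
  rw [← hdefbq, ← hdefcq, ← hdefdq, ← hdefq]
  field_simp
  linear_combination key + (dq*(1-bq) - qq*(1-cq)) * hs2
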